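/- Let K be algebraically closed and I = (f_1, …, f_r) ⊴ K[x]. Suppose for each 1 ≤ i ≤ r that h_i ∈ K[x] and l_i ∈ ℕ satisfy det(v)^{l_i} · f_i(v⁻¹) = h_i(v) for all v ∈ GL(n, K), and set k_i = det(x)·h_i ∈ K[x]. Then V*(I) is closed under inversion (v ∈ V*(I) implies v⁻¹ ∈ V*(I)) if and only if k_i ∈ √I (the radical of I) for every 1 ≤ i ≤ r. -/

import Mathlib

open MvPolynomial

/-- Evaluation of a polynomial in the `n²` indeterminates at an `n × n` matrix. -/
noncomputable def matEval {n : ℕ} {K : Type*} [Field K] (v : Matrix (Fin n) (Fin n) K) :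
    MvPolynomial (Fin n × Fin n) K →+* K :=
  MvPolynomial.eval (fun p => v p.1 p.2)

/-- `V(I)`: the matrices annihilating every polynomial of `I`. -/
def Vset {n : ℕ} {K : Type*} [Field K] (I : Ideal (MvPolynomial (Fin n × Fin n) K)) :
    Set (Matrix (Fin n) (Fin n) K) :=
  {v | ∀ f ∈ I, matEval v f = 0}

/-- `V*(I) = V(I) ∩ GL(n,K)`: the invertible matrices in `V(I)`. -/
def Vstar {n : ℕ} {K : Type*} [Field K] (I : Ideal (MvPolynomial (Fin n × Fin n) K)) :
    Set (Matrix (Fin n) (Fin n) K) :=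
  {v | v ∈ Vset I ∧ IsUnit v}

/-- `det(x)`, the determinant of the matrix of indeterminates. -/
noncomputable def detPoly (n : ℕ) (K : Type*) [Field K] : MvPolynomial (Fin n × Fin n) K :=
  (Matrix.of fun i j => MvPolynomial.X (i, j)).det


/-- `V*(I)` is closed under inversion iff `kᵢ ∈ √I` for every `i`,
where `kᵢ = det(x)·hᵢ` and `det(v)^{lᵢ} · fᵢ(v⁻¹) = hᵢ(v)` for all invertible `v`. -/
theorem stmt8 {n : ℕ} (hn : 1 ≤ n) {K : Type*} [Field K] [IsAlgClosed K]
    (r : ℕ) (f h k : Fin r → MvPolynomial (Fin n × Fin n) K) (l : Fin r → ℕ)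
    (I : Ideal (MvPolynomial (Fin n × Fin n) K)) (hI : I = Ideal.span (Set.range f))
    (hfh : ∀ i : Fin r, ∀ v : Matrix (Fin n) (Fin n) K, IsUnit v →
      v.det ^ l i * matEval v⁻¹ (f i) = matEval v (h i))
    (hk : ∀ i : Fin r, k i = detPoly n K * h i) :
    (∀ v ∈ Vstar I, v⁻¹ ∈ Vstar I) ↔ (∀ i : Fin r, k i ∈ I.radical) := by
  have hdet : ∀ v : Matrix (Fin n) (Fin n) K, matEval v (detPoly n K) = v.det := by
    intro v
    show matEval v (Matrix.of fun i j => MvPolynomial.X (i, j)).det = v.det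
    rw [RingHom.map_det]
    congr 1
    ext i j
    simp [matEval, Matrix.map_apply]
  constructor
  · intro hcl i
    rw [← MvPolynomial.vanishingIdeal_zeroLocus_eq_radical (K := K) I,
      MvPolynomial.mem_vanishingIdeal_iff]
    intro x hx
    change MvPolynomial.eval x (k i) = 0
    set v : Matrix (Fin n) (Fin n) K := Matrix.of fun i j => x (i, j) with hvdef
    have hxv : (fun p : Fin n × Fin n => v p.1 p.2) = x := by funext p; rfl
    have hev : ∀ g, MvPolynomial.eval x g = matEval v g := by
      intro g; rw [matEval, hxv]
    have hvV : v ∈ Vset I := by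
      intro g hg
      rw [← hev]
      exact hx g hg
    have hfi : f i ∈ I := by
      rw [hI]; exact Ideal.subset_span ⟨i, rfl⟩
    rw [hev, hk i, map_mul, hdet]
    by_cases hu : IsUnit v
    · have hinv := hcl v ⟨hvV, hu⟩
      have h0 : matEval v⁻¹ (f i) = 0 := hinv.1 (f i) hfi
      have := hfh i v hu
      rw [h0, mul_zero] at this
      rw [← this, mul_zero]
    · have : v.det = 0 := by
        by_contra hd
        exact hu (Matrix.isUnit_iff_isUnit_det v |>.mpr (isUnit_iff_ne_zero.mpr hd))
      rw [this, zero_mul]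
  · intro hrad v hv
    obtain ⟨hvV, hvU⟩ := hv
    have hdne : v.det ≠ 0 :=
      isUnit_iff_ne_zero.mp ((Matrix.isUnit_iff_isUnit_det v).mp hvU)
    refine ⟨?_, Matrix.isUnit_nonsing_inv_iff.mpr hvU⟩
    have hker : I ≤ RingHom.ker (matEval v⁻¹) := by
      rw [hI, Ideal.span_le]
      rintro g ⟨i, rfl⟩
      rw [SetLike.mem_coe, RingHom.mem_ker]
      -- k i vanishes at v
      obtain ⟨m, hm⟩ := hrad i
      have hkm : matEval v (k i ^ m) = 0 := hvV _ hm
      rw [map_pow] at hkm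
      have hk0 : matEval v (k i) = 0 := by
        rcases Nat.eq_zero_or_pos m with hm0 | hm0
        · exfalso
          rw [hm0, pow_zero] at hkm
          exact one_ne_zero hkm
        · exact pow_eq_zero_iff hm0.ne' |>.mp hkm
      rw [hk i, map_mul, hdet] at hk0
      have hh0 : matEval v (h i) = 0 := by
        rcases mul_eq_zero.mp hk0 with h1 | h1
        · exact absurd h1 hdne
        · exact h1
      have := hfh i v hvU
      rw [hh0] at this
      rcases mul_eq_zero.mp this with h1 | h1
      · exact absurd (pow_eq_zero_iff (n := l i) (by
          intro hl; rw [hl, pow_zero] at h1; exact one_ne_zero h1) |>.mp h1) hdne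
      · exact h1
    intro g hg
    exact hker hg
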